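/- Let B ∈ C²((0, +∞)) ∩ C¹([0, +∞)) satisfy B(0) = B'(0) = 0 and B(t), B'(t), B''(t) > 0 for t > 0, and assume B satisfies the inequalities of (A)' for some p > 1, κ̄ ∈ (0,1) and positive γ̄, Γ̄. Fix M > 0 and define B̂(t) := B(t) for t ∈ [0, M) and B̂(t) := a(t − M)² + b(t − M) + c for t ≥ M, where a = B''(M)/2, b = B'(M), c = B(M). Then B̂ ∈ C²((0, +∞)) ∩ C¹([0, +∞)), and there exist positive constants γ̂ ≤ Γ̂ such that γ̂ t ≤ B̂'(t) ≤ Γ̂ t and γ̂ ≤ B̂''(t) ≤ Γ̂ for all t > 0; that is, B̂ satisfies the inequalities of (A)' with p = 2 (and κ̄ arbitrary). -/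

import Mathlib

open scoped Classical

noncomputable section

/-- Lemma 2.4: if `B ∈ C²((0,∞)) ∩ C¹([0,∞))` with `B(0) = B'(0) = 0`,
`B, B', B'' > 0` on `(0,∞)`, satisfies the inequalities of (A)' with exponent `p > 1` and
`κ̄ ∈ (0,1)`, and `B̂` is the quadratic replacement of `B` beyond a fixed level `M > 0`,
then `B̂ ∈ C²((0,∞)) ∩ C¹([0,∞))` and `B̂` satisfies the inequalities of (A)' with `p = 2`. -/
theorem quadratic_modification {p κ γ Γ : ℝ} (B : ℝ → ℝ)
    (hp : 1 < p) (hκ : κ ∈ Set.Ioo (0 : ℝ) 1) (hγ : 0 < γ) (hΓ : 0 < Γ)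
    (hB2 : ContDiffOn ℝ 2 B (Set.Ioi 0)) (hB1 : ContDiffOn ℝ 1 B (Set.Ici 0))
    (hB0 : B 0 = 0) (hB'0 : derivWithin B (Set.Ici 0) 0 = 0)
    (hBpos : ∀ t : ℝ, 0 < t → 0 < B t ∧ 0 < deriv B t ∧ 0 < deriv (deriv B) t)
    (hA' : ∀ t : ℝ, 0 < t →
      γ * (κ + t) ^ (p - 2) * t ≤ deriv B t ∧ deriv B t ≤ Γ * (κ + t) ^ (p - 2) * t ∧
      γ * (κ + t) ^ (p - 2) ≤ deriv (deriv B) t ∧ deriv (deriv B) t ≤ Γ * (κ + t) ^ (p - 2))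
    (M : ℝ) (hM : 0 < M) (Bhat : ℝ → ℝ)
    (hBhat : ∀ t : ℝ, Bhat t =
      if t < M then B t
      else deriv (deriv B) M / 2 * (t - M) ^ 2 + deriv B M * (t - M) + B M) :
    ContDiffOn ℝ 2 Bhat (Set.Ioi 0) ∧ ContDiffOn ℝ 1 Bhat (Set.Ici 0) ∧
    ∃ γ' Γ' : ℝ, 0 < γ' ∧ γ' ≤ Γ' ∧ ∀ t : ℝ, 0 < t →
      γ' * t ≤ deriv Bhat t ∧ deriv Bhat t ≤ Γ' * t ∧
      γ' ≤ deriv (deriv Bhat) t ∧ deriv (deriv Bhat) t ≤ Γ' := by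
  obtain ⟨hκ0, _hκ1⟩ := hκ
  have hIoi : IsOpen (Set.Ioi (0:ℝ)) := isOpen_Ioi
  have hMemM : Set.Ioi (0:ℝ) ∈ nhds M := hIoi.mem_nhds hM
  have h21 : (2 : WithTop ℕ∞) = 1 + 1 := by norm_num
  have h10 : (1 : WithTop ℕ∞) = 0 + 1 := by norm_num
  obtain ⟨hBdiff, -, hB'c1⟩ :=
    (contDiffOn_succ_iff_deriv_of_isOpen hIoi).mp (h21 ▸ hB2)
  obtain ⟨hB'diff, -, hB''c0⟩ :=
    (contDiffOn_succ_iff_deriv_of_isOpen hIoi).mp (h10 ▸ hB'c1)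
  have hB''cont : ContinuousOn (deriv (deriv B)) (Set.Ioi 0) := hB''c0.continuousOn
  set a := deriv (deriv B) M with haDef
  set b := deriv B M with hbDef
  set Q : ℝ → ℝ := fun t => a / 2 * (t - M) ^ 2 + b * (t - M) + B M with hQ
  have hF1 : ∀ t, t ≤ M → Bhat t = B t := by
    intro t ht
    rcases lt_or_eq_of_le ht with h | h
    · rw [hBhat t, if_pos h]
    · subst h; rw [hBhat t, if_neg (lt_irrefl t)]; ring
  have hF2 : ∀ t, M ≤ t → Bhat t = Q t := by
    intro t ht
    rw [hBhat t, if_neg (not_lt.mpr ht)]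
  have hF3 : ∀ t, t < M → Bhat =ᶠ[nhds t] B := fun t ht =>
    Filter.eventually_of_mem (Iio_mem_nhds ht) (fun s hs => hF1 s (le_of_lt hs))
  have hF4 : ∀ t, M < t → Bhat =ᶠ[nhds t] Q := fun t ht =>
    Filter.eventually_of_mem (Ioi_mem_nhds ht) (fun s hs => hF2 s (le_of_lt hs))
  have hQder : ∀ x : ℝ, HasDerivAt Q (a * (x - M) + b) x := by
    intro x
    have h1 : HasDerivAt (fun t : ℝ => t - M) 1 x := (hasDerivAt_id x).sub_const M
    have h3 := (((h1.pow 2).const_mul (a/2)).add (h1.const_mul b)).add_const (B M)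
    have h3' : HasDerivAt Q (a / 2 * ((2:ℕ) * (x - M) ^ (2 - 1) * 1) + b * 1) x := h3
    convert h3' using 1
    push_cast
    ring
  have hBdiffM : DifferentiableAt ℝ B M :=
    (hB2.contDiffAt hMemM).differentiableAt (by norm_num)
  have hF7 : HasDerivAt Bhat b M := by
    have hL : HasDerivWithinAt Bhat b (Set.Iic M) M :=
      (hBdiffM.hasDerivAt.hasDerivWithinAt).congr (fun s hs => hF1 s hs) (hF1 M le_rfl)
    have hR : HasDerivWithinAt Bhat b (Set.Ici M) M := by
      have h := (hQder M).hasDerivWithinAt (s := Set.Ici M)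
      rw [sub_self, mul_zero, zero_add] at h
      exact h.congr (fun s hs => hF2 s hs) (hF2 M le_rfl)
    have h := hL.union hR
    rw [Set.Iic_union_Ici] at h
    exact hasDerivWithinAt_univ.mp h
  have hF5 : ∀ t, t < M → deriv Bhat t = deriv B t := fun t ht => (hF3 t ht).deriv_eq
  have hF8 : deriv Bhat M = b := hF7.deriv
  have hF9 : ∀ t, t ≤ M → deriv Bhat t = deriv B t := by
    intro t ht
    rcases lt_or_eq_of_le ht with h | h
    · exact hF5 t h
    · subst h; rw [hF8]
  have hF6 : ∀ t, M < t → deriv Bhat t = a * (t - M) + b := by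
    intro t ht
    rw [(hF4 t ht).deriv_eq, (hQder t).deriv]
  have hF10 : ∀ t, M ≤ t → deriv Bhat t = a * (t - M) + b := by
    intro t ht
    rcases lt_or_eq_of_le ht with h | h
    · exact hF6 t h
    · rw [← h, hF8, sub_self, mul_zero, zero_add]
  have hAff : ∀ x : ℝ, HasDerivAt (fun t => a * (t - M) + b) a x := by
    intro x
    have h1 : HasDerivAt (fun t : ℝ => t - M) 1 x := (hasDerivAt_id x).sub_const M
    have h := (h1.const_mul a).add_const b
    simpa using h
  have hB'c1M : ContDiffAt ℝ 1 (deriv B) M := hB'c1.contDiffAt hMemM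
  have hB'diffM : DifferentiableAt ℝ (deriv B) M := hB'c1M.differentiableAt one_ne_zero
  have hF13 : HasDerivAt (deriv Bhat) a M := by
    have hL : HasDerivWithinAt (deriv Bhat) a (Set.Iic M) M :=
      hB'diffM.hasDerivAt.hasDerivWithinAt.congr (fun s hs => hF9 s hs) (hF9 M le_rfl)
    have hR : HasDerivWithinAt (deriv Bhat) a (Set.Ici M) M :=
      (hAff M).hasDerivWithinAt.congr (fun s hs => hF10 s hs) (hF10 M le_rfl)
    have h := hL.union hR
    rw [Set.Iic_union_Ici] at h
    exact hasDerivWithinAt_univ.mp h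
  have hF14 : deriv (deriv Bhat) M = a := hF13.deriv
  have hF11 : ∀ t, t < M → deriv (deriv Bhat) t = deriv (deriv B) t := by
    intro t ht
    have h : deriv Bhat =ᶠ[nhds t] deriv B :=
      Filter.eventually_of_mem (Iio_mem_nhds ht) (fun s hs => hF9 s (le_of_lt hs))
    exact h.deriv_eq
  have hF12 : ∀ t, M < t → deriv (deriv Bhat) t = a := by
    intro t ht
    have h : deriv Bhat =ᶠ[nhds t] (fun s => a * (s - M) + b) :=
      Filter.eventually_of_mem (Ioi_mem_nhds ht) (fun s hs => hF10 s (le_of_lt hs))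
    rw [h.deriv_eq, (hAff t).deriv]
  have hF12' : ∀ t, M ≤ t → deriv (deriv Bhat) t = a := by
    intro t ht
    rcases lt_or_eq_of_le ht with h | h
    · exact hF12 t h
    · rw [← h, hF14]
  have hBhatDiff : ∀ t : ℝ, 0 < t → DifferentiableAt ℝ Bhat t := by
    intro t ht
    rcases lt_trichotomy t M with h | h | h
    · exact (hBdiff.differentiableAt (hIoi.mem_nhds ht)).congr_of_eventuallyEq (hF3 t h)
    · rw [h]; exact hF7.differentiableAt
    · exact (hQder t).differentiableAt.congr_of_eventuallyEq (hF4 t h)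
  have hB'hatDiff : ∀ t : ℝ, 0 < t → DifferentiableAt ℝ (deriv Bhat) t := by
    intro t ht
    rcases lt_trichotomy t M with h | h | h
    · have heq : deriv Bhat =ᶠ[nhds t] deriv B :=
        Filter.eventually_of_mem (Iio_mem_nhds h) (fun s hs => hF9 s (le_of_lt hs))
      exact (hB'diff.differentiableAt (hIoi.mem_nhds ht)).congr_of_eventuallyEq heq
    · rw [h]; exact hF13.differentiableAt
    · have heq : deriv Bhat =ᶠ[nhds t] (fun s => a * (s - M) + b) :=
        Filter.eventually_of_mem (Ioi_mem_nhds h) (fun s hs => hF10 s (le_of_lt hs))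
      exact (hAff t).differentiableAt.congr_of_eventuallyEq heq
  have hB''hatCont : ∀ t : ℝ, 0 < t → ContinuousAt (deriv (deriv Bhat)) t := by
    intro t ht
    rcases lt_trichotomy t M with h | h | h
    · have heq : deriv (deriv Bhat) =ᶠ[nhds t] deriv (deriv B) :=
        Filter.eventually_of_mem (Iio_mem_nhds h) (fun s hs => hF11 s hs)
      exact (hB''cont.continuousAt (hIoi.mem_nhds ht)).congr heq.symm
    · subst h
      have hWL : ContinuousWithinAt (deriv (deriv Bhat)) (Set.Ioc 0 t) t := by
        refine (hB''cont.continuousAt hMemM).continuousWithinAt.congr ?_ (by rw [hF14])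
        intro s hs
        rcases lt_or_eq_of_le hs.2 with h' | h'
        · exact hF11 s h'
        · rw [h', hF14]
      have hWR : ContinuousWithinAt (deriv (deriv Bhat)) (Set.Ici t) t := by
        refine continuousWithinAt_const.congr (fun s hs => hF12' s hs) (by rw [hF14])
      have h := hWL.union hWR
      rw [Set.Ioc_union_Ici_eq_Ioi hM] at h
      exact h.continuousAt hMemM
    · have heq : deriv (deriv Bhat) =ᶠ[nhds t] (fun _ => a) :=
        Filter.eventually_of_mem (Ioi_mem_nhds h) (fun s hs => hF12 s hs)
      exact continuousAt_const.congr heq.symm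
  have hC2 : ContDiffOn ℝ 2 Bhat (Set.Ioi 0) := by
    rw [h21, contDiffOn_succ_iff_deriv_of_isOpen hIoi]
    refine ⟨fun t ht => (hBhatDiff t ht).differentiableWithinAt, by simp, ?_⟩
    rw [h10, contDiffOn_succ_iff_deriv_of_isOpen hIoi]
    refine ⟨fun t ht => (hB'hatDiff t ht).differentiableWithinAt, by simp, ?_⟩
    rw [contDiffOn_zero]
    exact fun t ht => (hB''hatCont t ht).continuousWithinAt
  have hC1 : ContDiffOn ℝ 1 Bhat (Set.Ici 0) := by
    intro t ht
    rcases lt_or_ge t M with h | h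
    · exact (hB1 t ht).congr_of_eventuallyEq
        ((hF3 t h).filter_mono nhdsWithin_le_nhds) (hF1 t h.le)
    · exact (((hC2.contDiffAt (hIoi.mem_nhds (lt_of_lt_of_le hM h))).of_le
        (by norm_num))).contDiffWithinAt
  set c₁ := min (κ ^ (p-2)) ((κ + M) ^ (p-2)) with hc₁
  set c₂ := max (κ ^ (p-2)) ((κ + M) ^ (p-2)) with hc₂
  have hc₁pos : 0 < c₁ :=
    lt_min (Real.rpow_pos_of_pos hκ0 _) (Real.rpow_pos_of_pos (by linarith) _)
  have hpow : ∀ t : ℝ, 0 < t → t ≤ M → c₁ ≤ (κ + t) ^ (p-2) ∧ (κ + t) ^ (p-2) ≤ c₂ := by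
    intro t ht htM
    rcases le_or_gt 0 (p - 2) with he | he
    · exact ⟨le_trans (min_le_left _ _) (Real.rpow_le_rpow hκ0.le (by linarith) he),
        le_trans (Real.rpow_le_rpow (by linarith) (by linarith) he) (le_max_right _ _)⟩
    · exact ⟨le_trans (min_le_right _ _)
          (Real.rpow_le_rpow_of_nonpos (by linarith) (by linarith) he.le),
        le_trans (Real.rpow_le_rpow_of_nonpos hκ0 (by linarith) he.le) (le_max_left _ _)⟩
  obtain ⟨hb1, hb2, ha1, ha2⟩ := hA' M hM
  obtain ⟨hpM1, hpM2⟩ := hpow M hM le_rfl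
  have haL : γ * c₁ ≤ a := le_trans (mul_le_mul_of_nonneg_left hpM1 hγ.le) ha1
  have haU : a ≤ Γ * c₂ := le_trans ha2 (mul_le_mul_of_nonneg_left hpM2 hΓ.le)
  have hbL : γ * c₁ * M ≤ b :=
    le_trans (mul_le_mul_of_nonneg_right (mul_le_mul_of_nonneg_left hpM1 hγ.le) hM.le) hb1
  have hbU : b ≤ Γ * c₂ * M :=
    le_trans hb2 (mul_le_mul_of_nonneg_right (mul_le_mul_of_nonneg_left hpM2 hΓ.le) hM.le)
  refine ⟨hC2, hC1, γ * c₁, max (γ * c₁) (Γ * c₂), by positivity, le_max_left _ _, ?_⟩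
  intro t ht
  rcases lt_or_ge t M with h | h
  · obtain ⟨h1, h2, h3, h4⟩ := hA' t ht
    obtain ⟨hp1, hp2⟩ := hpow t ht h.le
    rw [hF5 t h, hF11 t h]
    have hΓ'2 : Γ * (κ+t)^(p-2) ≤ max (γ*c₁) (Γ*c₂) :=
      le_trans (mul_le_mul_of_nonneg_left hp2 hΓ.le) (le_max_right _ _)
    refine ⟨?_, ?_, ?_, le_trans h4 hΓ'2⟩
    · calc γ*c₁*t ≤ γ*(κ+t)^(p-2)*t :=
            mul_le_mul_of_nonneg_right (mul_le_mul_of_nonneg_left hp1 hγ.le) ht.le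
        _ ≤ _ := h1
    · exact le_trans h2 (mul_le_mul_of_nonneg_right hΓ'2 ht.le)
    · exact le_trans (mul_le_mul_of_nonneg_left hp1 hγ.le) h3
  · rw [hF10 t h, hF12' t h]
    have hΓa : a ≤ max (γ*c₁) (Γ*c₂) := le_trans haU (le_max_right _ _)
    have hbU' : b ≤ max (γ*c₁) (Γ*c₂) * M :=
      le_trans hbU (mul_le_mul_of_nonneg_right (le_max_right _ _) hM.le)
    refine ⟨?_, ?_, haL, hΓa⟩
    · nlinarith [mul_nonneg (sub_nonneg.mpr haL) (sub_nonneg.mpr h), hbL]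
    · nlinarith [mul_nonneg (sub_nonneg.mpr hΓa) (sub_nonneg.mpr h), hbU']

end
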